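/- Let n ≥ 1 and j ≥ 1, and let k ∈ {2j, 2j+1}. The one-step transition kernel of the gossip k-Majority process is stochastically monotone in the state: for all states s, s' ∈ {0,…,n} with s > s' and every d ∈ {0,…,n}, P(X_{t+1} ≥ d | X_t = s) ≥ P(X_{t+1} ≥ d | X_t = s'). -/
import Mathlib


open MeasureTheory Finset
open scoped ENNReal NNReal

noncomputable section

/-- Probability mass function of a binomial random variable `Bin(m, p)` at `k`. -/
def binomPMF (m k : ℕ) (p : ℝ) : ℝ := (m.choose k : ℝ) * p ^ k * (1 - p) ^ (m - k)

/-- Tail probability `P(Bin(m, p) ≥ j)`. -/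
def binomTail (m j : ℕ) (p : ℝ) : ℝ := ∑ k ∈ Finset.Icc j m, binomPMF m k p

/-- Cumulative distribution function `P(Bin(m, p) ≤ j)`. -/
def binomCDF (m j : ℕ) (p : ℝ) : ℝ := ∑ k ∈ Finset.range (j + 1), binomPMF m k p

/-- `majProb n j s` is the sample-majority probability `q_j(s)`: the probability that an
agent sampling `j` agents uniformly at random with replacement (when `s` of the `n` agents
hold opinion `a`) adopts opinion `a` under majority with uniform tie-breaking.
For odd `j = 2m+1` this is `P(Bin(2m+1, s/n) ≥ m+1)`; for even `j = 2m` it is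
`P(Bin(2m, s/n) ≥ m+1) + (1/2)·P(Bin(2m, s/n) = m)`. -/
def majProb (n j s : ℕ) : ℝ :=
  binomTail j (j / 2 + 1) ((s : ℝ) / n) +
    if Even j then (1 / 2) * binomPMF j (j / 2) ((s : ℝ) / n) else 0

/-- One-step transition kernel of the sequential `j`-Majority process on states `{0, …, n}`:
from state `s`, move to `s+1` with probability `((n-s)/n)·q_j(s)`, to `s-1` with probability
`(s/n)·(1-q_j(s))`, and stay at `s` otherwise. -/
def seqKernel (n j : ℕ) (s u : ℕ) : ℝ :=
  if u = s + 1 then (((n : ℝ) - s) / n) * majProb n j s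
  else if u + 1 = s then ((s : ℝ) / n) * (1 - majProb n j s)
  else if u = s then
    1 - (((n : ℝ) - s) / n) * majProb n j s - ((s : ℝ) / n) * (1 - majProb n j s)
  else 0

/-- One-step transition kernel of the gossip `j`-Majority process on states `{0, …, n}`:
from state `s`, the next state is distributed as `Bin(n, q_j(s))`. -/
def gossipKernel (n j : ℕ) (s u : ℕ) : ℝ := binomPMF n u (majProb n j s)

/-- `kernelTail K n s d` is the mass that the kernel `K` places, from state `s`,
on the set `{d, d+1, …, n}`, i.e. `P(X_{t+1} ≥ d | X_t = s)`. -/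
def kernelTail (K : ℕ → ℕ → ℝ) (n s d : ℕ) : ℝ := ∑ u ∈ Finset.Icc d n, K s u

/-- `IsMarkovChain μ K x X` states that, under the probability measure `μ`, the process
`X` is a Markov chain with one-step transition kernel `K` started at `x`: `X 0 = x`
almost surely, and conditionally on any finite path the next state is distributed
according to `K` applied to the current state. -/
def IsMarkovChain {Ω : Type*} [MeasurableSpace Ω] (μ : Measure Ω)
    (K : ℕ → ℕ → ℝ) (x : ℕ) (X : ℕ → Ω → ℕ) : Prop :=
  IsProbabilityMeasure μ ∧
  (∀ t, Measurable (X t)) ∧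
  μ {ω | X 0 ω = x} = 1 ∧
  ∀ (t : ℕ) (p : ℕ → ℕ) (u : ℕ),
    μ ({ω | X (t + 1) ω = u} ∩ {ω | ∀ i ≤ t, X i ω = p i}) =
      ENNReal.ofReal (K (p t) u) * μ {ω | ∀ i ≤ t, X i ω = p i}

/-- The convergence (hitting) time: the first time `t` with `X t ∈ {0, n}`
(`⊤` if the process never reaches a consensus state). -/
def hitTime {Ω : Type*} (n : ℕ) (X : ℕ → Ω → ℕ) (ω : Ω) : ℕ∞ :=
  ⨅ (t : ℕ) (_ : X t ω = 0 ∨ X t ω = n), (t : ℕ∞)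

lemma binomPMF_nonneg (m k : ℕ) {p : ℝ} (h0 : 0 ≤ p) (h1 : p ≤ 1) :
    0 ≤ binomPMF m k p := by
  unfold binomPMF
  have : (0:ℝ) ≤ 1 - p := by linarith
  positivity

lemma binomTail_zero (m : ℕ) (p : ℝ) : binomTail m 0 p = 1 := by
  unfold binomTail binomPMF
  have hI : Finset.Icc 0 m = Finset.range (m + 1) := by
    ext x; simp [Nat.lt_succ_iff]
  have h := add_pow p (1 - p) m
  rw [show p + (1 - p) = 1 by ring, one_pow] at h
  rw [hI, show (∑ k ∈ Finset.range (m + 1), (m.choose k : ℝ) * p ^ k * (1 - p) ^ (m - k))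
      = ∑ k ∈ Finset.range (m + 1), p ^ k * (1 - p) ^ (m - k) * (m.choose k : ℝ) from
    Finset.sum_congr rfl fun k _ => by ring, ← h]

lemma binomTail_anti (m : ℕ) {j j' : ℕ} (h : j ≤ j') {p : ℝ} (h0 : 0 ≤ p) (h1 : p ≤ 1) :
    binomTail m j' p ≤ binomTail m j p :=
  Finset.sum_le_sum_of_subset_of_nonneg (Finset.Icc_subset_Icc_left h)
    (fun i _ _ => binomPMF_nonneg m i h0 h1)

lemma binomTail_nonneg (m j : ℕ) {p : ℝ} (h0 : 0 ≤ p) (h1 : p ≤ 1) :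
    0 ≤ binomTail m j p :=
  Finset.sum_nonneg fun i _ => binomPMF_nonneg m i h0 h1

lemma binomTail_le_one (m j : ℕ) {p : ℝ} (h0 : 0 ≤ p) (h1 : p ≤ 1) :
    binomTail m j p ≤ 1 :=
  (binomTail_anti m (Nat.zero_le j) h0 h1).trans_eq (binomTail_zero m p)

lemma binomTail_succ (m j : ℕ) (p : ℝ) :
    binomTail (m + 1) (j + 1) p
      = p * binomTail m j p + (1 - p) * binomTail m (j + 1) p := by
  by_cases hjm : j ≤ m
  case neg =>
    unfold binomTail
    rw [Finset.Icc_eq_empty (by omega), Finset.Icc_eq_empty (by omega),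
      Finset.Icc_eq_empty (by omega)]
    simp
  unfold binomTail binomPMF
  have hmap : Finset.Icc (j + 1) (m + 1) = (Finset.Icc j m).map (addRightEmbedding 1) := by
    rw [Finset.map_add_right_Icc]
  rw [hmap, Finset.sum_map]
  simp only [addRightEmbedding_apply]
  have hstep : ∀ i ∈ Finset.Icc j m,
      ((m + 1).choose (i + 1) : ℝ) * p ^ (i + 1) * (1 - p) ^ (m + 1 - (i + 1))
        = p * ((m.choose i : ℝ) * p ^ i * (1 - p) ^ (m - i))
          + ((m.choose (i + 1) : ℝ) * p ^ (i + 1) * (1 - p) ^ (m - i)) := by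
    intro i hi
    rw [Nat.choose_succ_succ, show m + 1 - (i + 1) = m - i from by omega]
    push_cast [Nat.succ_eq_add_one]
    try ring
  rw [Finset.sum_congr rfl hstep, Finset.sum_add_distrib, ← Finset.mul_sum]
  congr 1
  · -- second part
    have hB : (∑ i ∈ Finset.Icc j m, (m.choose (i + 1) : ℝ) * p ^ (i + 1) * (1 - p) ^ (m - i))
        = ∑ i ∈ Finset.Ico j m, (m.choose (i + 1) : ℝ) * p ^ (i + 1) * (1 - p) ^ (m - i) := by
      rw [show Finset.Icc j m = insert m (Finset.Ico j m) from by
        rw [Finset.Ico_insert_right hjm], Finset.sum_insert (by simp)]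
      simp [Nat.choose_eq_zero_of_lt (Nat.lt_succ_self m)]
    rw [hB]
    have hmap2 : Finset.Icc (j + 1) m = (Finset.Ico j m).map (addRightEmbedding 1) := by
      rw [Finset.map_add_right_Ico, Finset.Ico_add_one_right_eq_Icc]
    rw [hmap2, Finset.sum_map, Finset.mul_sum]
    simp only [addRightEmbedding_apply]
    refine Finset.sum_congr rfl fun i hi => ?_
    have hi' : i < m := (Finset.mem_Ico.mp hi).2
    obtain ⟨e, he⟩ : ∃ e, m - i = e + 1 := ⟨m - i - 1, by omega⟩
    rw [show m - (i + 1) = e from by omega, he]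
    ring

lemma binomTail_mono (m : ℕ) : ∀ (j : ℕ) {p q : ℝ}, 0 ≤ p → p ≤ q → q ≤ 1 →
    binomTail m j p ≤ binomTail m j q := by
  induction m with
  | zero =>
    intro j p q h0 hpq h1
    match j with
    | 0 => rw [binomTail_zero, binomTail_zero]
    | j + 1 => unfold binomTail; rw [Finset.Icc_eq_empty (by omega)]; simp
  | succ m ih =>
    intro j p q h0 hpq h1
    match j with
    | 0 => rw [binomTail_zero, binomTail_zero]
    | j + 1 =>
      rw [binomTail_succ, binomTail_succ]
      have hA := ih j h0 hpq h1
      have hB := ih (j + 1) h0 hpq h1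
      have hAB := binomTail_anti m (Nat.le_succ j) h0 (by linarith : p ≤ 1)
      have hBn := binomTail_nonneg m (j + 1) h0 (by linarith : p ≤ 1)
      nlinarith [binomTail_nonneg m j h0 (le_trans hpq h1)]

lemma binomPMF_eq_tail (m k : ℕ) (hk : k ≤ m) (p : ℝ) :
    binomPMF m k p = binomTail m k p - binomTail m (k + 1) p := by
  unfold binomTail
  rw [Finset.Icc_eq_cons_Ioc hk, Finset.sum_cons, ← Finset.Icc_add_one_left_eq_Ioc]
  ring

lemma majProb_mono (n k : ℕ) {s s' : ℕ} (hn : 1 ≤ n) (hs : s ≤ n) (h : s' ≤ s) :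
    majProb n k s' ≤ majProb n k s := by
  have hn' : (0:ℝ) < n := by exact_mod_cast hn
  have h0 : (0:ℝ) ≤ (s' : ℝ) / n := by positivity
  have hpq : (s' : ℝ) / n ≤ (s : ℝ) / n := by
    gcongr
  have h1 : (s : ℝ) / n ≤ 1 := by
    rw [div_le_one hn']; exact_mod_cast hs
  unfold majProb
  by_cases he : Even k
  · simp only [he, if_true]
    rw [binomPMF_eq_tail k (k / 2) (Nat.div_le_self k 2),
        binomPMF_eq_tail k (k / 2) (Nat.div_le_self k 2)]
    have m1 := binomTail_mono k (k / 2) h0 hpq h1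
    have m2 := binomTail_mono k (k / 2 + 1) h0 hpq h1
    linarith
  · simp only [he, if_false]
    have := binomTail_mono k (k / 2 + 1) h0 hpq h1
    linarith

lemma majProb_nonneg (n k : ℕ) {s : ℕ} (hn : 1 ≤ n) (hs : s ≤ n) :
    0 ≤ majProb n k s := by
  have hn' : (0:ℝ) < n := by exact_mod_cast hn
  have h0 : (0:ℝ) ≤ (s : ℝ) / n := by positivity
  have h1 : (s : ℝ) / n ≤ 1 := by rw [div_le_one hn']; exact_mod_cast hs
  unfold majProb
  by_cases he : Even k
  · simp only [he, if_true]
    have := binomTail_nonneg k (k / 2 + 1) h0 h1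
    have := binomPMF_nonneg k (k / 2) h0 h1
    linarith
  · simp only [he, if_false]
    have := binomTail_nonneg k (k / 2 + 1) h0 h1
    linarith

lemma majProb_le_one (n k : ℕ) {s : ℕ} (hn : 1 ≤ n) (hs : s ≤ n) :
    majProb n k s ≤ 1 := by
  have hn' : (0:ℝ) < n := by exact_mod_cast hn
  have h0 : (0:ℝ) ≤ (s : ℝ) / n := by positivity
  have h1 : (s : ℝ) / n ≤ 1 := by rw [div_le_one hn']; exact_mod_cast hs
  unfold majProb
  by_cases he : Even k
  · simp only [he, if_true]
    rw [binomPMF_eq_tail k (k / 2) (Nat.div_le_self k 2)]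
    have := binomTail_le_one k (k / 2) h0 h1
    have := binomTail_le_one k (k / 2 + 1) h0 h1
    have := binomTail_nonneg k (k / 2 + 1) h0 h1
    linarith
  · simp only [he, if_false]
    have := binomTail_le_one k (k / 2 + 1) h0 h1
    linarith

theorem stmt12 (n j k : ℕ) (hn : 1 ≤ n) (hj : 1 ≤ j)
    (hk : k = 2 * j ∨ k = 2 * j + 1) (s s' d : ℕ)
    (hs : s ≤ n) (hs' : s' ≤ n) (hss : s' < s) (hd : d ≤ n) :
    kernelTail (gossipKernel n k) n s' d ≤ kernelTail (gossipKernel n k) n s d := by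
  show binomTail n d (majProb n k s') ≤ binomTail n d (majProb n k s)
  exact binomTail_mono n d (majProb_nonneg n k hn hs') (majProb_mono n k hn hs hss.le)
    (majProb_le_one n k hn hs)
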